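/- If g is strictly increasing on [0,∞) (with g(0) = 0, so g(r) > 0 for r > 0), then the function Γ(x) = G(|x|) is strictly convex on ℝⁿ. If g is merely increasing (nondecreasing) with g(r) > 0 for all r > 0, then Γ is convex on ℝⁿ, and Γ is strictly convex along every affine line that does not pass through the origin. -/

import Mathlib

open MeasureTheory Filter Set Topology

/-- The energy kernel `Γ(x) = G(|x|)`, where `G(r) = ∫₀^r g(s) ds`. -/
noncomputable def Gam {n : ℕ} (g : ℝ → ℝ)
    (x : EuclideanSpace ℝ (Fin n)) : ℝ :=
  ∫ s in (0:ℝ)..‖x‖, g s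

section Aux

variable {E : Type*} [NormedAddCommGroup E] [NormedSpace ℝ E]

/-- If `p • x` and `q • y` are on the same ray with `p, q > 0` and `x, y ≠ 0`,
then `x` is a positive multiple of `y`. -/
lemma sameRay_aux {p q : ℝ} (hp : 0 < p) (hq : 0 < q) {x y : E} (hx : x ≠ 0) (hy : y ≠ 0)
    (h : SameRay ℝ (p • x) (q • y)) : ∃ c : ℝ, 0 < c ∧ x = c • y := by
  have hx' : p • x ≠ 0 := smul_ne_zero hp.ne' hx
  have hy' : q • y ≠ 0 := smul_ne_zero hq.ne' hy
  obtain ⟨r, hr, hrxy⟩ := h.exists_pos_left hx' hy'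
  have hrp : r * p ≠ 0 := by positivity
  have h1 : (r * p) • x = q • y := by rw [mul_smul]; exact hrxy
  refine ⟨(r * p)⁻¹ * q, by positivity, ?_⟩
  rw [mul_smul, ← h1, inv_smul_smul₀ hrp]

end Aux

theorem kernel_convexity {n : ℕ} (hn : 1 ≤ n)
    (g : ℝ → ℝ) (hg_cont : ContinuousOn g (Ici 0)) (hg0 : g 0 = 0) :
    (StrictMonoOn g (Ici 0) →
      StrictConvexOn ℝ Set.univ (Gam g (n := n))) ∧
    ((MonotoneOn g (Ici 0) ∧ ∀ r : ℝ, 0 < r → 0 < g r) →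
      ConvexOn ℝ Set.univ (Gam g (n := n)) ∧
      ∀ a b : EuclideanSpace ℝ (Fin n), b ≠ 0 → (∀ t : ℝ, a + t • b ≠ 0) →
        StrictConvexOn ℝ Set.univ (fun t : ℝ => Gam g (a + t • b))) := by
  set G : ℝ → ℝ := fun r => ∫ s in (0:ℝ)..r, g s with hGdef
  -- interval integrability
  have hint : ∀ r : ℝ, 0 ≤ r → IntervalIntegrable g volume 0 r := by
    intro r hr
    exact (hg_cont.mono (by rw [uIcc_of_le hr]; exact Icc_subset_Ici_self)).intervalIntegrable
  -- continuity of G on [0, ∞)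
  have hGcont : ContinuousOn G (Ici 0) := by
    intro b hb
    have h1 : ContinuousWithinAt G (Icc 0 (b + 1)) b := by
      apply intervalIntegral.continuousWithinAt_primitive (measure_singleton b)
      rw [min_self]
      exact hint _ (le_max_left _ _)
    apply h1.mono_of_mem_nhdsWithin
    rw [← Ici_inter_Iic]
    exact inter_mem_nhdsWithin _ (Iic_mem_nhds (lt_add_one b))
  -- derivative of G on (0, ∞)
  have hGderiv : ∀ r : ℝ, 0 < r → HasDerivAt G (g r) r := by
    intro r hr
    have hat : ContinuousAt g r := hg_cont.continuousAt (Ici_mem_nhds hr)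
    exact intervalIntegral.integral_hasDerivAt_right (hint r hr.le)
      (ContinuousOn.stronglyMeasurableAtFilter isOpen_Ioi
        (hg_cont.mono Ioi_subset_Ici_self) r hr) hat
  have hGderiv' : ∀ r ∈ interior (Ici (0:ℝ)), deriv G r = g r := by
    intro r hr
    rw [interior_Ici] at hr
    exact (hGderiv r hr).deriv
  have hGdiff : DifferentiableOn ℝ G (interior (Ici (0:ℝ))) := by
    intro r hr
    rw [interior_Ici] at hr
    exact (hGderiv r hr).differentiableAt.differentiableWithinAt
  -- monotonicity / convexity of G according to the hypotheses on g
  have hGsmono : (∀ r : ℝ, 0 < r → 0 < g r) → StrictMonoOn G (Ici 0) := by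
    intro hpos
    apply strictMonoOn_of_deriv_pos (convex_Ici 0) hGcont
    intro r hr
    rw [interior_Ici] at hr
    rw [(hGderiv r hr).deriv]
    exact hpos r hr
  have hGconv : MonotoneOn g (Ici 0) → ConvexOn ℝ (Ici 0) G := by
    intro hmono
    apply MonotoneOn.convexOn_of_deriv (convex_Ici 0) hGcont hGdiff
    intro r hr s hs hrs
    rw [hGderiv' r hr, hGderiv' s hs]
    rw [interior_Ici] at hr hs
    exact hmono (Ioi_subset_Ici_self hr) (Ioi_subset_Ici_self hs) hrs
  have hGsconv : StrictMonoOn g (Ici 0) → StrictConvexOn ℝ (Ici 0) G := by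
    intro hsm
    apply StrictMonoOn.strictConvexOn_of_deriv (convex_Ici 0) hGcont
    intro r hr s hs hrs
    rw [hGderiv' r hr, hGderiv' s hs]
    rw [interior_Ici] at hr hs
    exact hsm (Ioi_subset_Ici_self hr) (Ioi_subset_Ici_self hs) hrs
  -- triangle inequality for weighted combinations
  have htri : ∀ (p q : ℝ), 0 ≤ p → 0 ≤ q → ∀ x y : EuclideanSpace ℝ (Fin n),
      ‖p • x + q • y‖ ≤ p * ‖x‖ + q * ‖y‖ := by
    intro p q hp hq x y
    calc ‖p • x + q • y‖ ≤ ‖p • x‖ + ‖q • y‖ := norm_add_le _ _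
      _ = p * ‖x‖ + q * ‖y‖ := by
          rw [norm_smul, norm_smul, Real.norm_eq_abs, Real.norm_eq_abs,
            abs_of_nonneg hp, abs_of_nonneg hq]
  have hmemIci : ∀ x : EuclideanSpace ℝ (Fin n), ‖x‖ ∈ Ici (0:ℝ) := fun x => norm_nonneg x
  constructor
  · -- strictly monotone g ⇒ strictly convex Γ
    intro hsm
    have hpos : ∀ r : ℝ, 0 < r → 0 < g r := by
      intro r hr
      have := hsm (le_refl (0:ℝ)) hr.le hr
      rwa [hg0] at this
    have hsmono := hGsmono hpos
    have hconv := hGconv hsm.monotoneOn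
    have hsconv := hGsconv hsm
    refine ⟨convex_univ, fun x _ y _ hxy p q hp hq hpq => ?_⟩
    simp only [Gam, smul_eq_mul]
    change G ‖p • x + q • y‖ < p * G ‖x‖ + q * G ‖y‖
    have htr := htri p q hp.le hq.le x y
    have hmemc : p * ‖x‖ + q * ‖y‖ ∈ Ici (0:ℝ) := by rw [mem_Ici]; positivity
    by_cases hne : ‖x‖ = ‖y‖
    · -- equal norms: strict triangle inequality
      have hx0 : x ≠ 0 := by
        intro h0
        apply hxy
        rw [h0] at hne ⊢
        rw [norm_zero] at hne
        exact (norm_eq_zero.mp hne.symm).symm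
      have hy0 : y ≠ 0 := by
        intro h0
        apply hx0
        rw [h0, norm_zero] at hne
        exact norm_eq_zero.mp hne
      have hnotray : ¬ SameRay ℝ (p • x) (q • y) := by
        intro hray
        obtain ⟨c, hc, hcxy⟩ := sameRay_aux hp hq hx0 hy0 hray
        have : ‖x‖ = c * ‖y‖ := by
          rw [hcxy, norm_smul, Real.norm_eq_abs, abs_of_nonneg hc.le]
        rw [hne] at this
        have hy0' : ‖y‖ ≠ 0 := norm_ne_zero_iff.mpr hy0
        have hc1 : c = 1 := mul_right_cancel₀ hy0' (by linarith : c * ‖y‖ = 1 * ‖y‖)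
        rw [hc1, one_smul] at hcxy
        exact hxy hcxy
      have hlt : ‖p • x + q • y‖ < p * ‖x‖ + q * ‖y‖ := by
        have := norm_add_lt_of_not_sameRay hnotray
        calc ‖p • x + q • y‖ < ‖p • x‖ + ‖q • y‖ := this
          _ = p * ‖x‖ + q * ‖y‖ := by
              rw [norm_smul, norm_smul, Real.norm_eq_abs, Real.norm_eq_abs,
                abs_of_nonneg hp.le, abs_of_nonneg hq.le]
      calc G ‖p • x + q • y‖ < G (p * ‖x‖ + q * ‖y‖) :=
            hsmono (hmemIci _) hmemc hlt
        _ ≤ p * G ‖x‖ + q * G ‖y‖ := by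
            have := hconv.2 (hmemIci x) (hmemIci y) hp.le hq.le hpq
            simpa using this
    · -- distinct norms: strict convexity of G
      calc G ‖p • x + q • y‖ ≤ G (p * ‖x‖ + q * ‖y‖) :=
            hsmono.monotoneOn (hmemIci _) hmemc htr
        _ < p * G ‖x‖ + q * G ‖y‖ := by
            have := hsconv.2 (hmemIci x) (hmemIci y) hne hp hq hpq
            simpa using this
  · -- monotone g with g > 0 on (0,∞)
    rintro ⟨hmono, hpos⟩
    have hsmono := hGsmono hpos
    have hconv := hGconv hmono
    constructor
    · refine ⟨convex_univ, fun x _ y _ p q hp hq hpq => ?_⟩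
      simp only [Gam, smul_eq_mul]
      change G ‖p • x + q • y‖ ≤ p * G ‖x‖ + q * G ‖y‖
      have htr := htri p q hp hq x y
      have hmemc : p * ‖x‖ + q * ‖y‖ ∈ Ici (0:ℝ) := by rw [mem_Ici]; positivity
      calc G ‖p • x + q • y‖ ≤ G (p * ‖x‖ + q * ‖y‖) :=
            hsmono.monotoneOn (hmemIci _) hmemc htr
        _ ≤ p * G ‖x‖ + q * G ‖y‖ := by
            have := hconv.2 (hmemIci x) (hmemIci y) hp hq hpq
            simpa using this
    · intro a b hb hline
      refine ⟨convex_univ, fun s _ t _ hst p q hp hq hpq => ?_⟩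
      simp only [Gam, smul_eq_mul]
      set x : EuclideanSpace ℝ (Fin n) := a + s • b with hxdef
      set y : EuclideanSpace ℝ (Fin n) := a + t • b with hydef
      have hcombo : a + (p * s + q * t) • b = p • x + q • y := by
        rw [hxdef, hydef]
        rw [smul_add, smul_add, smul_smul, smul_smul]
        rw [add_add_add_comm, ← add_smul, ← add_smul, hpq, one_smul]
      change G ‖a + (p * s + q * t) • b‖ < p * G ‖x‖ + q * G ‖y‖
      rw [hcombo]
      have hx0 : x ≠ 0 := hline s
      have hy0 : y ≠ 0 := hline t
      have hnotray : ¬ SameRay ℝ (p • x) (q • y) := by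
        intro hray
        obtain ⟨c, hc, hcxy⟩ := sameRay_aux hp hq hx0 hy0 hray
        -- a + s • b = c • (a + t • b)
        by_cases hc1 : c = 1
        · rw [hc1, one_smul] at hcxy
          apply hst
          have : (s - t) • b = 0 := by
            have h2 : a + s • b = a + t • b := hcxy
            have h3 : s • b = t • b := by
              exact add_left_cancel h2
            rw [sub_smul, h3, sub_self]
          rcases smul_eq_zero.mp this with h | h
          · linarith [sub_eq_zero.mp h]
          · exact absurd h hb
        · -- (1 - c) • a = (c * t - s) • b, so a is a multiple of b
          have key : (1 - c) • a = (c * t - s) • b := by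
            have h2 : a + s • b = c • a + (c * t) • b := by
              rw [← hxdef, hcxy, hydef, smul_add, smul_smul]
            rw [sub_smul, one_smul, sub_smul, sub_eq_sub_iff_add_eq_add, h2]
            abel
          have h1c : (1 - c) ≠ 0 := sub_ne_zero.mpr (Ne.symm hc1)
          apply hline (-((c * t - s) / (1 - c)))
          have ha : a = ((c * t - s) / (1 - c)) • b := by
            have := congrArg (fun v => (1 - c)⁻¹ • v) key
            simp only [inv_smul_smul₀ h1c, smul_smul] at this
            rw [this, div_eq_inv_mul]
          rw [ha, neg_smul, add_neg_cancel]  -- a + (-u) • b = 0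
      have hlt : ‖p • x + q • y‖ < p * ‖x‖ + q * ‖y‖ := by
        calc ‖p • x + q • y‖ < ‖p • x‖ + ‖q • y‖ := norm_add_lt_of_not_sameRay hnotray
          _ = p * ‖x‖ + q * ‖y‖ := by
              rw [norm_smul, norm_smul, Real.norm_eq_abs, Real.norm_eq_abs,
                abs_of_nonneg hp.le, abs_of_nonneg hq.le]
      have hmemc : p * ‖x‖ + q * ‖y‖ ∈ Ici (0:ℝ) := by rw [mem_Ici]; positivity
      calc G ‖p • x + q • y‖ < G (p * ‖x‖ + q * ‖y‖) :=
            hsmono (hmemIci _) hmemc hlt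
        _ ≤ p * G ‖x‖ + q * G ‖y‖ := by
            have := hconv.2 (hmemIci x) (hmemIci y) hp.le hq.le hpq
            simpa using this
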